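/- Explicit extremal Kostant degree in type C: let n ≥ 1, let λ ∈ ℤ^n be a dominant weight of C_n, and let w be a signed permutation of {1,…,n}. Then λ − w(λ) is a sum of positive roots of C_n, and n(λ,w) = Σ_{i : w(i) > i} (λ_i − λ_{w(i)}) + Σ_{i : w(i) < 0} λ_i. In particular n(λ + μ, w) = n(λ,w) + n(μ,w) for all dominant λ, μ. -/

import Mathlib

/-- The positive roots of type `C_n`, realized in `ℤ^n`: the vectors `ε_i - ε_j`
and `ε_i + ε_j` for `i < j`, and `2ε_i`. -/
def typeCPositiveRoots (n : ℕ) : Set (Fin n → ℤ) :=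
  {v | (∃ i : Fin n, v = Pi.single i 2) ∨
    ∃ i j : Fin n, i < j ∧
      (v = Pi.single i 1 - Pi.single j 1 ∨ v = Pi.single i 1 + Pi.single j 1)}

/-- The set of lengths of decompositions of `v` into a sum of positive roots of
type `C_n` (with repetitions). -/
def typeCDecompLengths (n : ℕ) (v : Fin n → ℤ) : Set ℕ :=
  {N | ∃ l : List (Fin n → ℤ),
    (∀ u ∈ l, u ∈ typeCPositiveRoots n) ∧ l.sum = v ∧ l.length = N}

/-- Explicit extremal Kostant degree in type `C_n`.  A signed permutation is encoded
as a permutation `σ` of `{1,…,n}` together with signs `s i ∈ {±1}`; it acts by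
`w(ε_i) = s(i) • ε_{σ(i)}`, so that `(λ - w(λ))_j = λ_j - s(σ⁻¹ j) * λ_{σ⁻¹ j}`.
The conditions `w(i) > i` and `w(i) < 0` become `s i = 1 ∧ i < σ i` and `s i = -1`.
For a dominant weight `λ` (nonincreasing, nonnegative), `λ - w(λ)` is a sum of
positive roots of `C_n` and
`n(λ,w) = Σ_{i : w(i) > i} (λ_i - λ_{w(i)}) + Σ_{i : w(i) < 0} λ_i`;
in particular `n(λ+μ,w) = n(λ,w) + n(μ,w)` for all dominant `λ, μ`. -/
lemma root_abs_sum {n : ℕ} {u : Fin n → ℤ} (hu : u ∈ typeCPositiveRoots n) :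
    ∑ j, |u j| = 2 := by
  rcases hu with ⟨i, rfl⟩ | ⟨i, j, hij, rfl | rfl⟩
  · have h : ∀ x, |(Pi.single i 2 : Fin n → ℤ) x| = if x = i then (2:ℤ) else 0 := by
      intro x; rcases eq_or_ne x i with rfl | h <;> simp [Pi.single_apply, *]
    simp only [h, Finset.sum_ite_eq', Finset.mem_univ, if_pos]
  · have h : ∀ x, |(Pi.single i 1 - Pi.single j 1 : Fin n → ℤ) x|
        = (if x = i then (1:ℤ) else 0) + (if x = j then 1 else 0) := by
      intro x
      rcases eq_or_ne x i with rfl | hxi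
      · simp [Pi.single_apply, hij.ne]
      · rcases eq_or_ne x j with rfl | hxj <;> simp [Pi.single_apply, hxi, *]
    simp only [h, Finset.sum_add_distrib, Finset.sum_ite_eq', Finset.mem_univ, if_pos]
    norm_num
  · have h : ∀ x, |(Pi.single i 1 + Pi.single j 1 : Fin n → ℤ) x|
        = (if x = i then (1:ℤ) else 0) + (if x = j then 1 else 0) := by
      intro x
      rcases eq_or_ne x i with rfl | hxi
      · simp [Pi.single_apply, hij.ne]
      · rcases eq_or_ne x j with rfl | hxj <;> simp [Pi.single_apply, hxi, *]
    simp only [h, Finset.sum_add_distrib, Finset.sum_ite_eq', Finset.mem_univ, if_pos]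
    norm_num

lemma length_lower {n : ℕ} (l : List (Fin n → ℤ))
    (hl : ∀ u ∈ l, u ∈ typeCPositiveRoots n) :
    ∑ j, |l.sum j| ≤ 2 * l.length := by
  induction l with
  | nil => simp
  | cons u t ih =>
    have h1 : ∀ j, |(u :: t).sum j| ≤ |u j| + |t.sum j| := by
      intro j
      have : (u :: t).sum j = u j + t.sum j := by simp
      rw [this]; exact abs_add_le _ _
    calc ∑ j, |(u :: t).sum j| ≤ ∑ j, (|u j| + |t.sum j|) :=
          Finset.sum_le_sum fun j _ => h1 j
      _ = ∑ j, |u j| + ∑ j, |t.sum j| := Finset.sum_add_distrib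
      _ ≤ 2 + 2 * t.length := by
          have := root_abs_sum (hl u List.mem_cons_self)
          have h2 := ih (fun v hv => hl v (List.mem_cons_of_mem u hv))
          omega
      _ = 2 * (u :: t).length := by simp [List.length_cons]; ring

section Dominant
variable {n : ℕ} (lam : Fin n → ℤ)

/-- extension of `lam` to `ℕ` by zero -/
noncomputable def Lext : ℕ → ℤ := fun x => if h : x < n then lam ⟨x, h⟩ else 0

variable {lam}

lemma Lext_anti (hdec : ∀ i j : Fin n, i ≤ j → lam j ≤ lam i) (hpos : ∀ i, 0 ≤ lam i) :
    ∀ a b : ℕ, a ≤ b → Lext lam b ≤ Lext lam a := by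
  intro a b hab
  unfold Lext
  by_cases hb : b < n
  · have ha : a < n := lt_of_le_of_lt hab hb
    rw [dif_pos hb, dif_pos ha]
    exact hdec ⟨a, ha⟩ ⟨b, hb⟩ hab
  · rw [dif_neg hb]
    by_cases ha : a < n
    · rw [dif_pos ha]; exact hpos _
    · rw [dif_neg ha]

lemma Lext_nonneg (hpos : ∀ i, 0 ≤ lam i) (x : ℕ) : 0 ≤ Lext lam x := by
  unfold Lext; split
  · exact hpos _
  · exact le_refl 0

lemma sum_le_top (hdec : ∀ i j : Fin n, i ≤ j → lam j ≤ lam i) (hpos : ∀ i, 0 ≤ lam i) :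
    ∀ (k : ℕ) (S : Finset (Fin n)), S.card = k →
      ∑ i ∈ S, lam i ≤ ∑ x ∈ Finset.range k, Lext lam x := by
  intro k
  induction k with
  | zero => intro S hS; rw [Finset.card_eq_zero] at hS; simp [hS]
  | succ k ih =>
    intro S hS
    have hne : S.Nonempty := Finset.card_pos.mp (by omega)
    set m := S.max' hne with hm
    have hmem : m ∈ S := S.max'_mem hne
    have hcard : (S.erase m).card = k := by
      rw [Finset.card_erase_of_mem hmem, hS]
      omega
    have hk : k ≤ m.val := by
      have hsub : S ⊆ Finset.Iic m := fun x hx => Finset.mem_Iic.mpr (S.le_max' x hx)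
      have := Finset.card_le_card hsub
      rw [hS, Fin.card_Iic] at this
      omega
    have h1 : lam m ≤ Lext lam k := by
      have : Lext lam m.val = lam m := by unfold Lext; rw [dif_pos m.isLt]
      rw [← this]
      exact Lext_anti hdec hpos k m.val hk
    calc ∑ i ∈ S, lam i = ∑ i ∈ S.erase m, lam i + lam m := (Finset.sum_erase_add S _ hmem).symm
      _ ≤ ∑ x ∈ Finset.range k, Lext lam x + Lext lam k := by
          exact add_le_add (ih _ hcard) h1
      _ = ∑ x ∈ Finset.range (k+1), Lext lam x := (Finset.sum_range_succ _ _).symm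

lemma sum_range_eq_sum_Iic (k : Fin n) :
    ∑ x ∈ Finset.range (k.val + 1), Lext lam x = ∑ j ∈ Finset.Iic k, lam j := by
  apply Finset.sum_bij (fun (x : ℕ) (hx : x ∈ Finset.range (k.val+1)) =>
    (⟨x, lt_of_lt_of_le (Finset.mem_range.mp hx) k.isLt⟩ : Fin n))
  · intro x hx
    exact Finset.mem_Iic.mpr (by
      have := Finset.mem_range.mp hx
      exact Fin.mk_le_of_le_val (by omega))
  · intro a ha b hb hab
    simpa using congrArg Fin.val hab
  · intro j hj
    refine ⟨j.val, Finset.mem_range.mpr ?_, by simp⟩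
    have := Finset.mem_Iic.mp hj
    omega
  · intro x hx
    unfold Lext
    rw [dif_pos]

end Dominant

lemma sum_support_pair {n : ℕ} {f : Fin n → ℤ} {i j : Fin n} (hij : i ≠ j)
    (h : ∀ x, x ≠ i → x ≠ j → f x = 0) : ∑ x, f x = f i + f j := by
  rw [← Finset.sum_subset (Finset.subset_univ ({i, j} : Finset (Fin n)))]
  · rw [Finset.sum_pair hij]
  · intro x _ hx
    simp only [Finset.mem_insert, Finset.mem_singleton, not_or] at hx
    exact h x hx.1 hx.2

lemma sum_support_single {n : ℕ} {f : Fin n → ℤ} {i : Fin n}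
    (h : ∀ x, x ≠ i → f x = 0) : ∑ x, f x = f i :=
  Finset.sum_eq_single_of_mem i (Finset.mem_univ i) (fun b _ hb => h b hb)

lemma exists_decomp {n : ℕ} : ∀ (t : ℕ), ∀ (v : Fin n → ℤ),
    (∑ j, |v j|) = (t : ℤ) →
    (∀ k : Fin n, 0 ≤ ∑ j ∈ Finset.Iic k, v j) →
    Even (∑ j, v j) →
    ∃ l : List (Fin n → ℤ), (∀ u ∈ l, u ∈ typeCPositiveRoots n) ∧ l.sum = v ∧
      2 * l.length = t := by
  intro t
  induction t using Nat.strong_induction_on with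
  | _ t ih =>
  intro v habs hpart heven
  by_cases hz : ∀ x, v x = 0
  · have hv : v = 0 := funext fun x => hz x
    have ht : (t : ℤ) = 0 := by rw [← habs, hv]; simp
    exact ⟨[], by simp, by simp [hv], by simp; omega⟩
  · push_neg at hz
    set F := Finset.univ.filter (fun x => v x ≠ 0) with hF
    have hFne : F.Nonempty := by
      obtain ⟨x, hx⟩ := hz
      exact ⟨x, by simp [hF, hx]⟩
    set i := F.min' hFne with hi
    have hiF : v i ≠ 0 := by
      have := F.min'_mem hFne
      simpa [hF] using this
    have hmin : ∀ x, x < i → v x = 0 := by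
      intro x hx
      by_contra hvx
      exact absurd (F.min'_le x (by simp [hF, hvx])) (not_le.mpr hx)
    have hvi : 1 ≤ v i := by
      have h1 : ∑ j ∈ Finset.Iic i, v j = v i :=
        Finset.sum_eq_single_of_mem i (Finset.mem_Iic.mpr le_rfl)
          (fun b hb hbi => hmin b (lt_of_le_of_ne (Finset.mem_Iic.mp hb) hbi))
      have := hpart i
      rw [h1] at this
      omega
    -- the recursion engine: given a good root, conclude
    have finish : ∀ α : Fin n → ℤ, α ∈ typeCPositiveRoots n →
        (∑ x, |v x - α x|) = (t : ℤ) - 2 →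
        (∀ k : Fin n, 0 ≤ ∑ j ∈ Finset.Iic k, (v j - α j)) →
        (∑ x, α x = 0 ∨ ∑ x, α x = 2) →
        ∃ l : List (Fin n → ℤ), (∀ u ∈ l, u ∈ typeCPositiveRoots n) ∧ l.sum = v ∧
          2 * l.length = t := by
      intro α hroot habs' hpart' hsum
      have ht2 : 2 ≤ t := by
        have h0 : 0 ≤ ∑ x, |v x - α x| :=
          Finset.sum_nonneg fun x _ => abs_nonneg _
        omega
      have heven' : Even (∑ x, (v x - α x)) := by
        rw [Finset.sum_sub_distrib]
        rcases hsum with h | h <;> rw [h]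
        · simpa using heven
        · exact heven.sub (by decide)
      have habs'' : (∑ x, |v x - α x|) = ((t - 2 : ℕ) : ℤ) := by
        rw [habs']; push_cast; omega
      obtain ⟨l', hl'root, hl'sum, hl'len⟩ :=
        ih (t - 2) (by omega) (fun x => v x - α x) habs'' hpart' heven'
      refine ⟨α :: l', ?_, ?_, ?_⟩
      · intro u hu
        rcases List.mem_cons.mp hu with rfl | hu
        · exact hroot
        · exact hl'root u hu
      · rw [List.sum_cons, hl'sum]
        funext x
        simp
      · simp only [List.length_cons]
        omega
    by_cases hj : ∃ x, i < x ∧ v x < 0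
    · -- there is a negative entry after i; use ε_i - ε_j
      set G := Finset.univ.filter (fun x => i < x ∧ v x < 0) with hG
      have hGne : G.Nonempty := by
        obtain ⟨x, hx1, hx2⟩ := hj
        exact ⟨x, by simp [hG, hx1, hx2]⟩
      set j := G.min' hGne with hgj
      have hjG : i < j ∧ v j < 0 :=
        (Finset.mem_filter.mp (G.min'_mem hGne)).2
      have hijlt : i < j := hjG.1
      have hvj : v j ≤ -1 := by omega
      have hmid : ∀ x, i < x → x < j → 0 ≤ v x := by
        intro x hx1 hx2
        by_contra hvx
        exact absurd (G.min'_le x (by simp [hG, hx1]; omega)) (not_le.mpr hx2)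
      set α : Fin n → ℤ := Pi.single i 1 - Pi.single j 1 with hα
      have hroot : α ∈ typeCPositiveRoots n := Or.inr ⟨i, j, hijlt, Or.inl rfl⟩
      have hαx : ∀ x, α x = (if x = i then (1:ℤ) else 0) - (if x = j then 1 else 0) := by
        intro x
        simp [hα, Pi.single_apply]
      have hαi : α i = 1 := by rw [hαx]; simp [hijlt.ne]
      have hαj : α j = -1 := by rw [hαx]; simp [hijlt.ne']
      have hα0 : ∀ x, x ≠ i → x ≠ j → α x = 0 := by
        intro x h1 h2; rw [hαx]; simp [h1, h2]
      apply finish α hroot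
      · have key : ∑ x, (|v x| - |v x - α x|) = 2 := by
          rw [sum_support_pair hijlt.ne (f := fun x => |v x| - |v x - α x|)]
          · have e1 : |v i| = v i := abs_of_nonneg (by omega)
            have e2 : |v i - α i| = v i - 1 := by rw [hαi]; exact abs_of_nonneg (by omega)
            have e3 : |v j| = -v j := abs_of_nonpos (by omega)
            have e4 : |v j - α j| = -(v j + 1) := by rw [hαj]; rw [abs_of_nonpos (by omega)]; ring
            rw [e1, e2, e3, e4]; ring
          · intro x h1 h2
            rw [hα0 x h1 h2]
            simp
        rw [Finset.sum_sub_distrib] at key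
        omega
      · intro k
        have hsplit : ∑ x ∈ Finset.Iic k, (v x - α x)
            = (∑ x ∈ Finset.Iic k, v x) -
              ((if i ∈ Finset.Iic k then (1:ℤ) else 0) - (if j ∈ Finset.Iic k then 1 else 0)) := by
          rw [Finset.sum_sub_distrib]
          congr 1
          have : ∀ x, α x = (if x = i then (1:ℤ) else 0) - (if x = j then 1 else 0) := hαx
          calc ∑ x ∈ Finset.Iic k, α x
              = ∑ x ∈ Finset.Iic k, ((if x = i then (1:ℤ) else 0) - (if x = j then 1 else 0)) :=
                Finset.sum_congr rfl (fun x _ => hαx x)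
            _ = _ := by
                rw [Finset.sum_sub_distrib, Finset.sum_ite_eq', Finset.sum_ite_eq']
        rw [hsplit]
        by_cases hik : i ∈ Finset.Iic k
        · by_cases hjk : j ∈ Finset.Iic k
          · simp only [hik, hjk, if_pos]
            have := hpart k
            omega
          · -- i ≤ k < j : show partial sum ≥ 1
            simp only [hik, if_pos, hjk, if_neg, not_false_iff]
            have hik' : i ≤ k := Finset.mem_Iic.mp hik
            have hkj : k < j := by
              by_contra h
              exact hjk (Finset.mem_Iic.mpr (le_of_not_gt h))
            have hge : v i ≤ ∑ x ∈ Finset.Iic k, v x := by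
              have hpoint : ∀ x ∈ Finset.Iic k, (if x = i then v i else 0) ≤ v x := by
                intro x hx
                by_cases hxi : x = i
                · subst hxi; simp
                · simp only [hxi, if_neg, not_false_iff]
                  rcases lt_or_gt_of_ne hxi with h1 | h1
                  · rw [hmin x h1]
                  · exact hmid x h1 (lt_of_le_of_lt (Finset.mem_Iic.mp hx) hkj)
              calc v i = ∑ x ∈ Finset.Iic k, (if x = i then v i else 0) := by
                    rw [Finset.sum_ite_eq' (Finset.Iic k) i (fun _ => v i), if_pos hik]
                _ ≤ _ := Finset.sum_le_sum hpoint
            omega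
        · have hjk : j ∉ Finset.Iic k := by
            intro h
            exact hik (Finset.mem_Iic.mpr (le_of_lt (lt_of_lt_of_le hijlt (Finset.mem_Iic.mp h))))
          simp only [hik, hjk, if_neg, not_false_iff]
          have := hpart k
          omega
      · left
        calc ∑ x, α x = ∑ x, ((if x = i then (1:ℤ) else 0) - (if x = j then 1 else 0)) :=
              Finset.sum_congr rfl (fun x _ => hαx x)
          _ = 0 := by
              rw [Finset.sum_sub_distrib, Finset.sum_ite_eq', Finset.sum_ite_eq']
              simp
    · -- no negative entries after i: v is pointwise nonnegative
      push_neg at hj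
      have hnn : ∀ x, 0 ≤ v x := by
        intro x
        rcases lt_trichotomy x i with h | h | h
        · rw [hmin x h]
        · subst h; omega
        · exact hj x h
      by_cases hv2 : 2 ≤ v i
      · -- use 2ε_i
        set α : Fin n → ℤ := Pi.single i 2 with hα
        have hroot : α ∈ typeCPositiveRoots n := Or.inl ⟨i, rfl⟩
        have hαx : ∀ x, α x = if x = i then (2:ℤ) else 0 := by
          intro x; simp [hα, Pi.single_apply]
        have hαi : α i = 2 := by rw [hαx]; simp
        apply finish α hroot
        · have key : ∑ x, (|v x| - |v x - α x|) = 2 := by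
            rw [sum_support_single (i := i) (f := fun x => |v x| - |v x - α x|)]
            · have e1 : |v i| = v i := abs_of_nonneg (by omega)
              have e2 : |v i - α i| = v i - 2 := by rw [hαi]; exact abs_of_nonneg (by omega)
              rw [e1, e2]; ring
            · intro x h1
              rw [hαx x]; simp [h1]
          rw [Finset.sum_sub_distrib] at key
          omega
        · intro k
          apply Finset.sum_nonneg
          intro x _
          rw [hαx x]
          by_cases hxi : x = i
          · subst hxi; simp; omega
          · simp [hxi]; exact hnn x
        · right
          calc ∑ x, α x = ∑ x, (if x = i then (2:ℤ) else 0) :=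
                Finset.sum_congr rfl (fun x _ => hαx x)
            _ = 2 := by rw [Finset.sum_ite_eq']; simp
      · -- v i = 1 ; find another positive entry and use ε_i + ε_j
        have hvi1 : v i = 1 := by omega
        have hex : ∃ x, x ≠ i ∧ 1 ≤ v x := by
          by_contra hno
          push_neg at hno
          have hallz : ∀ x, x ≠ i → v x = 0 := by
            intro x hx
            have := hno x hx
            have := hnn x
            omega
          have : ∑ x, v x = v i := sum_support_single hallz
          rw [this, hvi1] at heven
          exact (Int.not_odd_iff_even.mpr heven) odd_one
        obtain ⟨j, hjne, hvj⟩ := hex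
        have hijlt : i < j := by
          rcases lt_or_gt_of_ne hjne with h | h
          · exfalso; have := hmin j h; omega
          · exact h
        set α : Fin n → ℤ := Pi.single i 1 + Pi.single j 1 with hα
        have hroot : α ∈ typeCPositiveRoots n := Or.inr ⟨i, j, hijlt, Or.inr rfl⟩
        have hαx : ∀ x, α x = (if x = i then (1:ℤ) else 0) + (if x = j then 1 else 0) := by
          intro x; simp [hα, Pi.single_apply]
        have hαi : α i = 1 := by rw [hαx]; simp [hijlt.ne]
        have hαj : α j = 1 := by rw [hαx]; simp [hijlt.ne']
        have hα0 : ∀ x, x ≠ i → x ≠ j → α x = 0 := by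
          intro x h1 h2; rw [hαx]; simp [h1, h2]
        apply finish α hroot
        · have key : ∑ x, (|v x| - |v x - α x|) = 2 := by
            rw [sum_support_pair hijlt.ne (f := fun x => |v x| - |v x - α x|)]
            · have e1 : |v i| = v i := abs_of_nonneg (by omega)
              have e2 : |v i - α i| = 0 := by rw [hαi, hvi1]; simp
              have e3 : |v j| = v j := abs_of_nonneg (by omega)
              have e4 : |v j - α j| = v j - 1 := by rw [hαj]; exact abs_of_nonneg (by omega)
              rw [e1, e2, e3, e4, hvi1]; ring
            · intro x h1 h2
              rw [hα0 x h1 h2]; simp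
          rw [Finset.sum_sub_distrib] at key
          omega
        · intro k
          apply Finset.sum_nonneg
          intro x _
          rw [hαx x]
          by_cases hxi : x = i
          · subst hxi; simp [hijlt.ne]; omega
          · by_cases hxj : x = j
            · subst hxj; simp [hxi]; omega
            · simp [hxi, hxj]; exact hnn x
        · right
          calc ∑ x, α x = ∑ x, ((if x = i then (1:ℤ) else 0) + (if x = j then 1 else 0)) :=
                Finset.sum_congr rfl (fun x _ => hαx x)
            _ = 2 := by
                rw [Finset.sum_add_distrib, Finset.sum_ite_eq', Finset.sum_ite_eq']
                simp

lemma typeC_isLeast {n : ℕ} (lam : Fin n → ℤ)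
    (hdec : ∀ i j : Fin n, i ≤ j → lam j ≤ lam i) (hpos : ∀ i, 0 ≤ lam i)
    (σ : Equiv.Perm (Fin n)) (s : Fin n → ℤ) (hs : ∀ i, s i = 1 ∨ s i = -1) :
    IsLeast (typeCDecompLengths n
        (fun j => lam j - s (σ.symm j) * lam (σ.symm j)))
      (((∑ i ∈ Finset.univ.filter (fun i : Fin n => s i = 1 ∧ i < σ i),
          (lam i - lam (σ i))) +
        (∑ i ∈ Finset.univ.filter (fun i : Fin n => s i = -1), lam i)).toNat) := by
  set V : Fin n → ℤ := fun j => lam j - s (σ.symm j) * lam (σ.symm j) with hV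
  set A : ℤ := ∑ i ∈ Finset.univ.filter (fun i : Fin n => s i = 1 ∧ i < σ i),
      (lam i - lam (σ i)) with hA
  set B : ℤ := ∑ i ∈ Finset.univ.filter (fun i : Fin n => s i = -1), lam i with hB
  have hA0 : 0 ≤ A := by
    apply Finset.sum_nonneg
    intro i hi
    have h := (Finset.mem_filter.mp hi).2.2
    have := hdec i (σ i) (le_of_lt h)
    omega
  have hB0 : 0 ≤ B := Finset.sum_nonneg fun i _ => hpos i
  -- pointwise absolute value identity
  have hpoint : ∀ i : Fin n, |lam (σ i) - s i * lam i| =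
      (2 * (if s i = 1 ∧ i < σ i then lam i - lam (σ i) else 0) +
        2 * (if s i = -1 then lam i else 0)) + (lam (σ i) - lam i) := by
    intro i
    rcases hs i with h1 | h1
    · by_cases h2 : i < σ i
      · have := hdec i (σ i) (le_of_lt h2)
        rw [if_pos ⟨h1, h2⟩, if_neg (by rw [h1]; decide), h1]
        rw [abs_of_nonpos (by omega)]
        ring
      · have := hdec (σ i) i (le_of_not_gt h2)
        rw [if_neg (by tauto), if_neg (by rw [h1]; decide), h1]
        rw [abs_of_nonneg (by omega)]
        ring
    · have := hpos i
      have := hpos (σ i)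
      rw [if_neg (by rw [h1]; intro h; exact absurd h.1 (by decide)), if_pos h1, h1]
      rw [abs_of_nonneg (by omega)]
      ring
  -- total absolute value
  have habs : ∑ j, |V j| = 2 * (A + B) := by
    have e0 : ∑ j, |V j| = ∑ i, |lam (σ i) - s i * lam i| := by
      rw [← Equiv.sum_comp σ (fun j => |V j|)]
      apply Finset.sum_congr rfl
      intro i _
      rw [hV]
      simp only [Equiv.symm_apply_apply]
    rw [e0]
    calc ∑ i, |lam (σ i) - s i * lam i|
        = ∑ i, ((2 * (if s i = 1 ∧ i < σ i then lam i - lam (σ i) else 0) +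
            2 * (if s i = -1 then lam i else 0)) + (lam (σ i) - lam i)) :=
          Finset.sum_congr rfl fun i _ => hpoint i
      _ = 2 * A + 2 * B + (∑ i, lam (σ i) - ∑ i, lam i) := by
          rw [Finset.sum_add_distrib, Finset.sum_add_distrib, ← Finset.mul_sum, ← Finset.mul_sum,
            Finset.sum_sub_distrib, hA, hB, Finset.sum_filter, Finset.sum_filter]
      _ = 2 * (A + B) := by
          rw [Equiv.sum_comp σ lam]
          ring
  -- partial sums are nonnegative
  have hpart : ∀ k : Fin n, 0 ≤ ∑ j ∈ Finset.Iic k, V j := by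
    intro k
    have e1 : ∑ j ∈ Finset.Iic k, V j =
        ∑ j ∈ Finset.Iic k, lam j - ∑ j ∈ Finset.Iic k, s (σ.symm j) * lam (σ.symm j) := by
      rw [hV, Finset.sum_sub_distrib]
    have e2 : ∑ j ∈ Finset.Iic k, s (σ.symm j) * lam (σ.symm j) ≤
        ∑ j ∈ Finset.Iic k, lam (σ.symm j) := by
      apply Finset.sum_le_sum
      intro j _
      rcases hs (σ.symm j) with h | h <;> rw [h]
      · omega
      · have := hpos (σ.symm j); omega
    have e3 : ∑ j ∈ Finset.Iic k, lam (σ.symm j) ≤ ∑ j ∈ Finset.Iic k, lam j := by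
      have e4 : ∑ j ∈ Finset.Iic k, lam (σ.symm j) =
          ∑ i ∈ (Finset.Iic k).image σ.symm, lam i := by
        rw [Finset.sum_image (fun x _ y _ h => σ.symm.injective h)]
      rw [e4, ← sum_range_eq_sum_Iic (lam := lam) k]
      apply sum_le_top hdec hpos
      rw [Finset.card_image_of_injective _ σ.symm.injective, Fin.card_Iic]
    omega
  -- evenness
  have heven : Even (∑ j, V j) := by
    have e1 : ∑ j, V j = ∑ i, (lam i - s i * lam i) := by
      rw [hV, Finset.sum_sub_distrib]
      conv_rhs => rw [Finset.sum_sub_distrib]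
      congr 1
      exact Equiv.sum_comp σ.symm (fun i => s i * lam i)
    have e2 : ∑ i, (lam i - s i * lam i) = 2 * ∑ i, (if s i = 1 then 0 else lam i) := by
      rw [Finset.mul_sum]
      apply Finset.sum_congr rfl
      intro i _
      rcases hs i with h | h <;> rw [h] <;> simp <;> ring
    rw [e1, e2]
    exact even_two_mul _
  constructor
  · -- membership
    have habs' : ∑ j, |V j| = ((2 * (A + B)).toNat : ℤ) := by
      rw [habs, Int.toNat_of_nonneg (by omega)]
    obtain ⟨l, hroot, hsum, hlen⟩ := exists_decomp ((2 * (A + B)).toNat) V habs' hpart heven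
    refine ⟨l, hroot, hsum, ?_⟩
    have h1 : ((2 * (A + B)).toNat : ℤ) = 2 * (A + B) := Int.toNat_of_nonneg (by omega)
    have h2 : ((A + B).toNat : ℤ) = A + B := Int.toNat_of_nonneg (by omega)
    omega
  · -- lower bound
    intro N hN
    obtain ⟨l, hroot, hsum, hlen⟩ := hN
    have hlow := length_lower l hroot
    rw [hsum] at hlow
    rw [habs] at hlow
    have h2 : ((A + B).toNat : ℤ) = A + B := Int.toNat_of_nonneg (by omega)
    omega

/-- Explicit extremal Kostant degree in type `C_n`.  A signed permutation is encoded
as a permutation `σ` of `{1,…,n}` together with signs `s i ∈ {±1}`; it acts by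
`w(ε_i) = s(i) • ε_{σ(i)}`, so that `(λ - w(λ))_j = λ_j - s(σ⁻¹ j) * λ_{σ⁻¹ j}`.
The conditions `w(i) > i` and `w(i) < 0` become `s i = 1 ∧ i < σ i` and `s i = -1`.
For a dominant weight `λ` (nonincreasing, nonnegative), `λ - w(λ)` is a sum of
positive roots of `C_n` and
`n(λ,w) = Σ_{i : w(i) > i} (λ_i - λ_{w(i)}) + Σ_{i : w(i) < 0} λ_i`;
in particular `n(λ+μ,w) = n(λ,w) + n(μ,w)` for all dominant `λ, μ`. -/
theorem extremal_kostant_degree_typeC (n : ℕ) (hn : 1 ≤ n)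
    (lam : Fin n → ℤ)
    (hdec : ∀ i j : Fin n, i ≤ j → lam j ≤ lam i) (hpos : ∀ i, 0 ≤ lam i)
    (σ : Equiv.Perm (Fin n)) (s : Fin n → ℤ) (hs : ∀ i, s i = 1 ∨ s i = -1) :
    IsLeast (typeCDecompLengths n
        (fun j => lam j - s (σ.symm j) * lam (σ.symm j)))
      (((∑ i ∈ Finset.univ.filter (fun i : Fin n => s i = 1 ∧ i < σ i),
          (lam i - lam (σ i))) +
        (∑ i ∈ Finset.univ.filter (fun i : Fin n => s i = -1), lam i)).toNat) ∧
    (∀ mu : Fin n → ℤ, (∀ i j : Fin n, i ≤ j → mu j ≤ mu i) → (∀ i, 0 ≤ mu i) →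
      sInf (typeCDecompLengths n
          (fun j => (lam j + mu j) - s (σ.symm j) * (lam (σ.symm j) + mu (σ.symm j)))) =
        sInf (typeCDecompLengths n (fun j => lam j - s (σ.symm j) * lam (σ.symm j))) +
        sInf (typeCDecompLengths n (fun j => mu j - s (σ.symm j) * mu (σ.symm j)))) := by
  refine ⟨typeC_isLeast lam hdec hpos σ s hs, ?_⟩
  intro mu hmu1 hmu2
  have Hl := typeC_isLeast lam hdec hpos σ s hs
  have Hm := typeC_isLeast mu hmu1 hmu2 σ s hs
  have Hlm := typeC_isLeast (fun i => lam i + mu i)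
    (fun i j h => add_le_add (hdec i j h) (hmu1 i j h))
    (fun i => add_nonneg (hpos i) (hmu2 i)) σ s hs
  have e1 : sInf (typeCDecompLengths n
      (fun j => (lam j + mu j) - s (σ.symm j) * (lam (σ.symm j) + mu (σ.symm j)))) =
      (((∑ i ∈ Finset.univ.filter (fun i : Fin n => s i = 1 ∧ i < σ i),
          ((lam i + mu i) - (lam (σ i) + mu (σ i)))) +
        (∑ i ∈ Finset.univ.filter (fun i : Fin n => s i = -1), (lam i + mu i))).toNat) :=
    Hlm.csInf_eq
  have e2 : sInf (typeCDecompLengths n (fun j => lam j - s (σ.symm j) * lam (σ.symm j))) =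
      (((∑ i ∈ Finset.univ.filter (fun i : Fin n => s i = 1 ∧ i < σ i),
          (lam i - lam (σ i))) +
        (∑ i ∈ Finset.univ.filter (fun i : Fin n => s i = -1), lam i)).toNat) :=
    Hl.csInf_eq
  have e3 : sInf (typeCDecompLengths n (fun j => mu j - s (σ.symm j) * mu (σ.symm j))) =
      (((∑ i ∈ Finset.univ.filter (fun i : Fin n => s i = 1 ∧ i < σ i),
          (mu i - mu (σ i))) +
        (∑ i ∈ Finset.univ.filter (fun i : Fin n => s i = -1), mu i)).toNat) :=
    Hm.csInf_eq
  rw [e1, e2, e3]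
  have hsplitA : ∑ i ∈ Finset.univ.filter (fun i : Fin n => s i = 1 ∧ i < σ i),
      ((lam i + mu i) - (lam (σ i) + mu (σ i))) =
      (∑ i ∈ Finset.univ.filter (fun i : Fin n => s i = 1 ∧ i < σ i), (lam i - lam (σ i))) +
      (∑ i ∈ Finset.univ.filter (fun i : Fin n => s i = 1 ∧ i < σ i), (mu i - mu (σ i))) := by
    rw [← Finset.sum_add_distrib]
    exact Finset.sum_congr rfl fun i _ => by ring
  have hsplitB : ∑ i ∈ Finset.univ.filter (fun i : Fin n => s i = -1), (lam i + mu i) =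
      (∑ i ∈ Finset.univ.filter (fun i : Fin n => s i = -1), lam i) +
      (∑ i ∈ Finset.univ.filter (fun i : Fin n => s i = -1), mu i) :=
    Finset.sum_add_distrib
  have hAl : 0 ≤ ∑ i ∈ Finset.univ.filter (fun i : Fin n => s i = 1 ∧ i < σ i),
      (lam i - lam (σ i)) := by
    apply Finset.sum_nonneg
    intro i hi
    have h := (Finset.mem_filter.mp hi).2.2
    have := hdec i (σ i) (le_of_lt h)
    omega
  have hAm : 0 ≤ ∑ i ∈ Finset.univ.filter (fun i : Fin n => s i = 1 ∧ i < σ i),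
      (mu i - mu (σ i)) := by
    apply Finset.sum_nonneg
    intro i hi
    have h := (Finset.mem_filter.mp hi).2.2
    have := hmu1 i (σ i) (le_of_lt h)
    omega
  have hBl : 0 ≤ ∑ i ∈ Finset.univ.filter (fun i : Fin n => s i = -1), lam i :=
    Finset.sum_nonneg fun i _ => hpos i
  have hBm : 0 ≤ ∑ i ∈ Finset.univ.filter (fun i : Fin n => s i = -1), mu i :=
    Finset.sum_nonneg fun i _ => hmu2 i
  rw [hsplitA, hsplitB]
  omega
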